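/- The polynomial P(z_1,z_2,z_3) = y^3 + x^2, where y = z_3 - (z_1+z_2)/2 and x = z_1 - z_2, is translation invariant, and its derived polynomial under fusing z_1 and z_2 is y^3 = (z_3 - z^{(2)})^3 (up to scalar); hence D_{2,1} = 3 while S_3 - S_2 = 2 - 0 = 2, so D_{2,1} > S_3 - S_2. -/
import Mathlib


open MvPolynomial

noncomputable section

/-- Variable type for the fusion of the first `a` variables: `Sum.inl i` are the
auxiliary variables `ξ i`, `Sum.inr none` is the fused variable (center of mass)
`z`, and `Sum.inr (some j)` are the untouched variables `z j` for `a ≤ j`. -/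
abbrev FVars (N : ℕ) := Fin N ⊕ Option (Fin N)

/-- The auxiliary variables `ξ i` for `i < a`, with the constraint `∑ ξ i = 0`
imposed by eliminating the last one. -/
def fuseXi (N a : ℕ) (i : Fin N) : MvPolynomial (FVars N) ℂ :=
  if i.val + 1 < a then X (Sum.inl i)
  else -(∑ j ∈ Finset.univ.filter (fun j : Fin N => j.val + 1 < a), X (Sum.inl j))

/-- Fusion substitution `z i = z + λ * ξ i` for `i < a`, where `λ` is the
polynomial variable and `z = X (Sum.inr none)`. -/
def fuse (N a : ℕ) : MvPolynomial (Fin N) ℂ →ₐ[ℂ] Polynomial (MvPolynomial (FVars N) ℂ) :=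
  MvPolynomial.aeval (fun i =>
    if i.val < a then Polynomial.C (X (Sum.inr none)) + Polynomial.X * Polynomial.C (fuseXi N a i)
    else Polynomial.C (X (Sum.inr (some i))))

/-- `Qcoeff N a P m` is the coefficient `Q^m` of `λ^m` in the fusion expansion of `P`. -/
def Qcoeff (N a : ℕ) (P : MvPolynomial (Fin N) ℂ) (m : ℕ) : MvPolynomial (FVars N) ℂ :=
  (fuse N a P).coeff m

/-- `minDeg N P a` is `S_a`: the minimal total degree of `P` in `z 1, ..., z a`. -/
def minDeg (N : ℕ) (P : MvPolynomial (Fin N) ℂ) (a : ℕ) : ℕ :=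
  sInf {d | ∃ mo ∈ P.support, d = ∑ i ∈ Finset.univ.filter (fun i : Fin N => i.val < a), mo i}

/-- Translation invariance of a multivariate polynomial. -/
def TransInv (N : ℕ) (P : MvPolynomial (Fin N) ℂ) : Prop :=
  ∀ c : ℂ, MvPolynomial.aeval (fun i : Fin N => X i + MvPolynomial.C c) P = P

/-- Symmetry of a multivariate polynomial. -/
def SymmPoly (N : ℕ) (P : MvPolynomial (Fin N) ℂ) : Prop :=
  ∀ σ : Equiv.Perm (Fin N), rename ⇑σ P = P

/-- The counterexample polynomial `P = y^3 + x^2` with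
`y = z_3 - (z_1+z_2)/2` and `x = z_1 - z_2`. -/
def Pnh : MvPolynomial (Fin 3) ℂ :=
  (X 2 - MvPolynomial.C (1/2 : ℂ) * (X 0 + X 1)) ^ 3 + (X 0 - X 1) ^ 2

/-! ### Auxiliary lemmas -/

lemma transInvPnh : TransInv 3 Pnh := by
  intro c
  have h : (MvPolynomial.C (1/2 : ℂ) : MvPolynomial (Fin 3) ℂ) * (C c + C c) = C c := by
    rw [← C_add, ← C_mul]; congr 1; ring
  simp only [Pnh, map_add, map_sub, map_mul, map_pow, aeval_X, aeval_C, algebraMap_eq]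
  congr 2
  · linear_combination -h
  · ring

lemma qcoeffPnh : Qcoeff 3 2 Pnh 0 =
    (X (Sum.inr (some 2)) - X (Sum.inr none) : MvPolynomial (FVars 3) ℂ) ^ 3 := by
  have h : (MvPolynomial.C (1/2 : ℂ) : MvPolynomial (FVars 3) ℂ) *
      (X (Sum.inr none) + X (Sum.inr none)) = X (Sum.inr none) := by
    rw [← two_mul, ← mul_assoc,
      show ((2 : MvPolynomial (FVars 3) ℂ)) = MvPolynomial.C 2 from rfl, ← C_mul]
    norm_num
  simp only [Qcoeff, fuse, Pnh, map_add, map_sub, map_mul, map_pow, aeval_X, aeval_C,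
    Polynomial.coeff_zero_eq_eval_zero]
  simp only [Polynomial.eval_add, Polynomial.eval_sub, Polynomial.eval_mul, Polynomial.eval_pow,
    Polynomial.eval_C, Polynomial.eval_X, ite_true, ite_false, zero_mul, mul_zero, add_zero]
  norm_num
  rw [h]

lemma ycube : ((X 2 - MvPolynomial.C (1/2:ℂ) * (X 0 + X 1))^3 : MvPolynomial (Fin 3) ℂ) =
    X 2*X 2*X 2
    + (-3*(1/2:ℂ)) • (X 2*X 2*X 0) + (-3*(1/2:ℂ)) • (X 2*X 2*X 1)
    + (3*(1/2:ℂ)^2) • (X 2*X 0*X 0) + (6*(1/2:ℂ)^2) • (X 2*X 0*X 1)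
    + (3*(1/2:ℂ)^2) • (X 2*X 1*X 1)
    + (-(1/2:ℂ)^3) • (X 0*X 0*X 0) + (-3*(1/2:ℂ)^3) • (X 0*X 0*X 1)
    + (-3*(1/2:ℂ)^3) • (X 0*X 1*X 1) + (-(1/2:ℂ)^3) • (X 1*X 1*X 1) := by
  simp only [smul_eq_C_mul, map_mul, map_pow, map_neg, map_ofNat, map_div₀, map_one]
  ring

lemma coeff230 : coeff (Finsupp.single 2 3) Pnh = 1 := by
  rw [Pnh, coeff_add, ycube, show ((X 0 - X 1 : MvPolynomial (Fin 3) ℂ)^2)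
      = X 0^2 - MvPolynomial.C 2 * X 0 * X 1 + X 1^2 by rw [map_ofNat]; ring]
  simp [coeff_add, coeff_sub, coeff_X_pow, coeff_smul, coeff_mul_X', coeff_X',
    Finsupp.single_eq_single_iff, Finsupp.mem_support_iff, Finsupp.single_apply,
    ← Finsupp.single_tsub]

lemma coeff020 : coeff (Finsupp.single 0 2) Pnh = 1 := by
  rw [Pnh, coeff_add, ycube, show ((X 0 - X 1 : MvPolynomial (Fin 3) ℂ)^2)
      = X 0^2 - MvPolynomial.C 2 * X 0 * X 1 + X 1^2 by rw [map_ofNat]; ring]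
  simp [coeff_add, coeff_sub, coeff_X_pow, coeff_smul, coeff_mul_X', coeff_X',
    Finsupp.single_eq_single_iff, Finsupp.mem_support_iff, Finsupp.single_apply,
    ← Finsupp.single_tsub]

lemma minDeg2 : minDeg 3 Pnh 2 = 0 := by
  rw [minDeg, Nat.sInf_eq_zero]
  left
  refine ⟨Finsupp.single 2 3, ?_, ?_⟩
  · rw [mem_support_iff, coeff230]; exact one_ne_zero
  · rw [show (Finset.univ.filter (fun i : Fin 3 => i.val < 2)) = {0, 1} by decide]
    simp [Finsupp.single_apply]

lemma minDeg3 : minDeg 3 Pnh 3 = 2 := by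
  have huniv : (Finset.univ.filter (fun i : Fin 3 => i.val < 3)) = Finset.univ := by decide
  apply le_antisymm
  · apply Nat.sInf_le
    refine ⟨Finsupp.single 0 2, ?_, ?_⟩
    · rw [mem_support_iff, coeff020]; exact one_ne_zero
    · rw [huniv]; simp [Finsupp.single_apply, Fin.sum_univ_three]
  · apply le_csInf
    · exact ⟨2, ⟨Finsupp.single 0 2, by rw [mem_support_iff, coeff020]; exact one_ne_zero,
        by rw [huniv]; simp [Finsupp.single_apply, Fin.sum_univ_three]⟩⟩
    · rintro d ⟨mo, hmo, rfl⟩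
      rw [huniv]
      have hsum : ∑ i ∈ Finset.univ, mo i = mo.degree := by
        rw [Finsupp.degree]
        exact (Finset.sum_subset (Finset.subset_univ _)
          (fun i _ h => Finsupp.notMem_support_iff.mp h)).symm
      rw [hsum]
      have hy3 : IsHomogeneous ((X 2 - MvPolynomial.C (1/2:ℂ) * (X 0 + X 1))^3
          : MvPolynomial (Fin 3) ℂ) 3 := by
        have h1 : IsHomogeneous ((X 2 - MvPolynomial.C (1/2:ℂ) * (X 0 + X 1))
            : MvPolynomial (Fin 3) ℂ) 1 :=
          (isHomogeneous_X _ _).sub (((isHomogeneous_X _ _).add (isHomogeneous_X _ _)).C_mul _)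
        simpa using h1.pow 3
      have hx2 : IsHomogeneous ((X 0 - X 1 : MvPolynomial (Fin 3) ℂ)^2) 2 := by
        simpa using ((isHomogeneous_X _ _).sub (isHomogeneous_X _ _)).pow 2
      rw [Pnh] at hmo
      have hmem := MvPolynomial.support_add hmo
      rcases Finset.mem_union.mp hmem with hm | hm
      · have : mo.degree = 3 := by
          by_contra hne
          exact (MvPolynomial.mem_support_iff.mp hm) (hy3.coeff_eq_zero hne)
        omega
      · have : mo.degree = 2 := by
          by_contra hne
          exact (MvPolynomial.mem_support_iff.mp hm) (hx2.coeff_eq_zero hne)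
        omega

lemma dvdPnh :
    ((X (Sum.inr none) - X (Sum.inr (some 2)) : MvPolynomial (FVars 3) ℂ) ^ 3 ∣
        Qcoeff 3 2 Pnh 0 ∧
      ¬ (X (Sum.inr none) - X (Sum.inr (some 2)) : MvPolynomial (FVars 3) ℂ) ^ 4 ∣
        Qcoeff 3 2 Pnh 0) := by
  rw [qcoeffPnh]
  constructor
  · exact ⟨-1, by ring⟩
  · rintro ⟨r, hr⟩
    have := congrArg (MvPolynomial.aeval (fun v : FVars 3 =>
      if v = Sum.inr none then (Polynomial.X : Polynomial ℂ) else 0)) hr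
    simp at this
    have h4 : (Polynomial.X : Polynomial ℂ) ^ 4 ∣ (-Polynomial.X : Polynomial ℂ)^3 :=
      ⟨_, this⟩
    rw [Polynomial.X_pow_dvd_iff] at h4
    have h3 := h4 3 (by norm_num)
    rw [show ((-Polynomial.X : Polynomial ℂ)) ^ 3 = -(Polynomial.X ^ 3) by ring] at h3
    simp [Polynomial.coeff_X_pow] at h3

/-- `Pnh` is translation invariant, its derived polynomial under
fusing `z_1, z_2` (the lowest, i.e. `λ^0`, coefficient of the fusion expansion)
is `(z_3 - z^{(2)})^3`, whose order of vanishing along `z^{(2)} = z_3` is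
`D_{2,1} = 3`, while `S_2 = 0` and `S_3 = 2`; hence `D_{2,1} > S_3 - S_2`. -/
theorem stmt12 :
    TransInv 3 Pnh ∧
    Qcoeff 3 2 Pnh 0 =
      (X (Sum.inr (some 2)) - X (Sum.inr none) : MvPolynomial (FVars 3) ℂ) ^ 3 ∧
    ((X (Sum.inr none) - X (Sum.inr (some 2)) : MvPolynomial (FVars 3) ℂ) ^ 3 ∣
        Qcoeff 3 2 Pnh 0 ∧
      ¬ (X (Sum.inr none) - X (Sum.inr (some 2)) : MvPolynomial (FVars 3) ℂ) ^ 4 ∣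
        Qcoeff 3 2 Pnh 0) ∧
    minDeg 3 Pnh 2 = 0 ∧ minDeg 3 Pnh 3 = 2 ∧
    minDeg 3 Pnh 3 - minDeg 3 Pnh 2 < 3 := by

  exact ⟨transInvPnh, qcoeffPnh, dvdPnh, minDeg2, minDeg3, by rw [minDeg2, minDeg3]; norm_num⟩
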